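/- Let j ∈ ℕ, N = 2j+1, and t : M³ → ℂ, with φ its discrete Fourier presentation. Then the tetrahedron invariant satisfies Σ_{a,b,c,a',b',c'=0}^{N−1} φ_{abc}·φ_{ab'c'}·φ_{a'bc'}·φ_{a'b'c} = N⁶·Σ over (n_a, n_b, n_c, n_{a'}, n_{b'}, n_{c'}) ∈ M⁶ of (−1)^{(j−|n_a|)+(j−|n_b|)+(j−|n_c|)+(j−|n_{a'}|)+(j−|n_{b'}|)+(j−|n_{c'}|)}·t(n_a, n_b, n_c)·t(−n_a, n_{b'}, n_{c'})·t(n_{a'}, −n_b, −n_{c'})·t(−n_{a'}, −n_{b'}, −n_c). -/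

import Mathlib

open Finset

/-- The discrete Fourier presentation of `t : M³ → ℂ`, where `M = {-j, …, j}`:
`φ_{abc} = Σ_{m∈M³} t(m₁,m₂,m₃) i^{3j-|m₁|-|m₂|-|m₃|} exp(-(2πi/N)(a m₁ + b m₂ + c m₃))`. -/
noncomputable def fourierPresentation (j N : ℕ) (t : ℤ → ℤ → ℤ → ℂ) :
    ℤ → ℤ → ℤ → ℂ :=
  fun a b c =>
    ∑ m1 ∈ Finset.Icc (-(j : ℤ)) (j : ℤ), ∑ m2 ∈ Finset.Icc (-(j : ℤ)) (j : ℤ),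
      ∑ m3 ∈ Finset.Icc (-(j : ℤ)) (j : ℤ),
        t m1 m2 m3 * Complex.I ^ (3 * (j : ℤ) - |m1| - |m2| - |m3|) *
          Complex.exp (-(2 * (Real.pi : ℂ) * Complex.I / (N : ℂ)) *
            ((a : ℂ) * (m1 : ℂ) + (b : ℂ) * (m2 : ℂ) + (c : ℂ) * (m3 : ℂ)))

noncomputable def Ew (N : ℕ) (a m : ℤ) : ℂ :=
  Complex.exp (-(2 * (Real.pi : ℂ) * Complex.I / (N : ℂ)) * (a : ℂ) * (m : ℂ))

lemma Ew_mul (N : ℕ) (a m n : ℤ) : Ew N a m * Ew N a n = Ew N a (m + n) := by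
  rw [Ew, Ew, Ew, ← Complex.exp_add]; congr 1; push_cast; ring

lemma two_pi_I_ne : (2 * (Real.pi : ℂ) * Complex.I) ≠ 0 := by
  simp [Real.pi_ne_zero, Complex.I_ne_zero, Complex.ofReal_ne_zero]

lemma sum_Ew (N : ℕ) (hN : 0 < N) (k : ℤ) :
    ∑ a : Fin N, Ew N (a : ℕ) k = if (N : ℤ) ∣ k then (N : ℂ) else 0 := by
  have hNne : (N : ℂ) ≠ 0 := by exact_mod_cast hN.ne'
  have hz : ∀ a : Fin N, Ew N (a : ℕ) k
      = Complex.exp (-(2 * (Real.pi : ℂ) * Complex.I / (N : ℂ)) * (k : ℂ)) ^ (a : ℕ) := by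
    intro a; rw [← Complex.exp_nat_mul, Ew]; congr 1; push_cast; ring
  simp only [hz]
  set z := Complex.exp (-(2 * (Real.pi : ℂ) * Complex.I / (N : ℂ)) * (k : ℂ)) with hzdef
  rw [Fin.sum_univ_eq_sum_range]
  by_cases hdvd : (N : ℤ) ∣ k
  · obtain ⟨d, hd⟩ := hdvd
    have h1 : z = 1 := by
      rw [hzdef, hd]; push_cast
      rw [show -(2 * (Real.pi:ℂ) * Complex.I / (N:ℂ)) * ((N:ℂ) * (d:ℂ))
          = (-d : ℤ) * (2 * Real.pi * Complex.I) by push_cast; field_simp]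
      exact Complex.exp_int_mul_two_pi_mul_I (-d)
    rw [if_pos ⟨d, hd⟩]; simp [h1]
  · have hz1 : z ≠ 1 := by
      rw [hzdef, Ne, Complex.exp_eq_one_iff]
      rintro ⟨n, hn⟩
      have hn' : -(2 * (Real.pi:ℂ) * Complex.I * (k:ℂ))
          = (n:ℂ) * (2 * Real.pi * Complex.I) * (N:ℂ) := by
        field_simp at hn; linear_combination (2 * (Real.pi:ℂ) * Complex.I) * hn
      have h2 : (2 * (Real.pi:ℂ) * Complex.I) * (k : ℂ)
          = (2 * (Real.pi:ℂ) * Complex.I) * ((-n * N : ℤ) : ℂ) := by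
        push_cast; linear_combination -hn'
      have h3 : (k : ℂ) = ((-n * N : ℤ) : ℂ) := mul_left_cancel₀ two_pi_I_ne h2
      have : k = -n * N := by exact_mod_cast h3
      exact hdvd ⟨-n, by linarith⟩
    have hzN : z ^ N = 1 := by
      rw [hzdef, ← Complex.exp_nat_mul]
      rw [show (N:ℂ) * (-(2 * (Real.pi:ℂ) * Complex.I / (N:ℂ)) * (k:ℂ))
          = (-k : ℤ) * (2 * Real.pi * Complex.I) by push_cast; field_simp]
      exact Complex.exp_int_mul_two_pi_mul_I (-k)
    rw [geom_sum_eq hz1, hzN]; simp [hdvd]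

lemma sum6_factor {n : ℕ} (f1 f2 f3 f4 f5 f6 : Fin n → ℂ) (K : ℂ) :
    (∑ a : Fin n, ∑ b : Fin n, ∑ c : Fin n, ∑ a' : Fin n, ∑ b' : Fin n, ∑ c' : Fin n,
      K * f1 a * f2 b * f3 c * f4 a' * f5 b' * f6 c')
    = K * (∑ c' : Fin n, f6 c') * (∑ b' : Fin n, f5 b') * (∑ a' : Fin n, f4 a') *
        (∑ c : Fin n, f3 c) * (∑ b : Fin n, f2 b) * (∑ a : Fin n, f1 a) := by
  simp only [Finset.sum_mul, Finset.mul_sum]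
  iterate 6 refine Finset.sum_congr rfl fun _ _ => ?_
  ring

lemma tripleSum_mul (s : Finset ℤ) (f : ℤ → ℤ → ℤ → ℂ) (X : ℂ) :
    (∑ m1 ∈ s, ∑ m2 ∈ s, ∑ m3 ∈ s, f m1 m2 m3) * X
      = ∑ m1 ∈ s, ∑ m2 ∈ s, ∑ m3 ∈ s, f m1 m2 m3 * X := by
  rw [Finset.sum_mul]
  refine Finset.sum_congr rfl fun _ _ => ?_
  rw [Finset.sum_mul]
  exact Finset.sum_congr rfl fun _ _ => Finset.sum_mul ..

lemma mul_tripleSum (s : Finset ℤ) (f : ℤ → ℤ → ℤ → ℂ) (X : ℂ) :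
    (X * ∑ m1 ∈ s, ∑ m2 ∈ s, ∑ m3 ∈ s, f m1 m2 m3)
      = ∑ m1 ∈ s, ∑ m2 ∈ s, ∑ m3 ∈ s, X * f m1 m2 m3 := by
  rw [Finset.mul_sum]
  refine Finset.sum_congr rfl fun _ _ => ?_
  rw [Finset.mul_sum]
  exact Finset.sum_congr rfl fun _ _ => Finset.mul_sum ..

lemma prod4_flatten (s : Finset ℤ) (f1 f2 f3 f4 : ℤ → ℤ → ℤ → ℂ) :
    (∑ m1 ∈ s, ∑ m2 ∈ s, ∑ m3 ∈ s, f1 m1 m2 m3) *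
    (∑ m1 ∈ s, ∑ m2 ∈ s, ∑ m3 ∈ s, f2 m1 m2 m3) *
    (∑ m1 ∈ s, ∑ m2 ∈ s, ∑ m3 ∈ s, f3 m1 m2 m3) *
    (∑ m1 ∈ s, ∑ m2 ∈ s, ∑ m3 ∈ s, f4 m1 m2 m3)
    = ∑ m1 ∈ s, ∑ m2 ∈ s, ∑ m3 ∈ s, ∑ n1 ∈ s, ∑ n2 ∈ s, ∑ n3 ∈ s,
      ∑ p1 ∈ s, ∑ p2 ∈ s, ∑ p3 ∈ s, ∑ q1 ∈ s, ∑ q2 ∈ s, ∑ q3 ∈ s,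
        f1 m1 m2 m3 * (f2 n1 n2 n3 * (f3 p1 p2 p3 * f4 q1 q2 q3)) := by
  rw [mul_assoc, mul_assoc, tripleSum_mul]
  refine Finset.sum_congr rfl fun m1 _ => Finset.sum_congr rfl fun m2 _ =>
    Finset.sum_congr rfl fun m3 _ => ?_
  rw [tripleSum_mul, mul_tripleSum]
  refine Finset.sum_congr rfl fun n1 _ => Finset.sum_congr rfl fun n2 _ =>
    Finset.sum_congr rfl fun n3 _ => ?_
  rw [tripleSum_mul, mul_tripleSum, mul_tripleSum]
  refine Finset.sum_congr rfl fun p1 _ => Finset.sum_congr rfl fun p2 _ =>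
    Finset.sum_congr rfl fun p3 _ => ?_
  rw [mul_tripleSum, mul_tripleSum, mul_tripleSum]

lemma neg_mem_IccJ (j : ℕ) (m : ℤ) :
    (-m) ∈ Finset.Icc (-(j:ℤ)) (j:ℤ) ↔ m ∈ Finset.Icc (-(j:ℤ)) (j:ℤ) := by
  simp only [Finset.mem_Icc]; omega

lemma Ipow_combine (j : ℕ) (x1 x2 x3 y1 y2 y3 : ℤ) (h1 : |x1| ≤ (j:ℤ))
    (h2 : |x2| ≤ (j:ℤ)) (h3 : |x3| ≤ (j:ℤ)) (h4 : |y1| ≤ (j:ℤ))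
    (h5 : |y2| ≤ (j:ℤ)) (h6 : |y3| ≤ (j:ℤ)) :
    Complex.I ^ (3*(j:ℤ) - |x1| - |x2| - |x3|) * Complex.I ^ (3*(j:ℤ) - |x1| - |y2| - |y3|) *
    Complex.I ^ (3*(j:ℤ) - |y1| - |x2| - |y3|) * Complex.I ^ (3*(j:ℤ) - |y1| - |y2| - |x3|)
    = (-1:ℂ) ^ (((j:ℤ)-|x1|) + ((j:ℤ)-|x2|) + ((j:ℤ)-|x3|)
        + ((j:ℤ)-|y1|) + ((j:ℤ)-|y2|) + ((j:ℤ)-|y3|)) := by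
  have hK0 : 0 ≤ ((j:ℤ)-|x1|) + ((j:ℤ)-|x2|) + ((j:ℤ)-|x3|)
      + ((j:ℤ)-|y1|) + ((j:ℤ)-|y2|) + ((j:ℤ)-|y3|) := by linarith
  obtain ⟨k, hk⟩ := Int.eq_ofNat_of_zero_le hK0
  rw [← zpow_add₀ Complex.I_ne_zero, ← zpow_add₀ Complex.I_ne_zero,
    ← zpow_add₀ Complex.I_ne_zero]
  rw [show (3*(j:ℤ) - |x1| - |x2| - |x3|) + (3*(j:ℤ) - |x1| - |y2| - |y3|)
      + (3*(j:ℤ) - |y1| - |x2| - |y3|) + (3*(j:ℤ) - |y1| - |y2| - |x3|)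
      = 2 * ((((j:ℤ)-|x1|) + ((j:ℤ)-|x2|) + ((j:ℤ)-|x3|)
        + ((j:ℤ)-|y1|) + ((j:ℤ)-|y2|) + ((j:ℤ)-|y3|))) by ring]
  rw [hk, show (2*((k:ℕ):ℤ)) = ((2*k : ℕ):ℤ) by push_cast; ring, zpow_natCast,
    zpow_natCast, pow_mul, Complex.I_sq]


lemma push_in {N : ℕ} (s : Finset ℤ)
    (g : Fin N → ℤ → ℤ → ℤ → ℤ → ℤ → ℤ → ℤ → ℤ → ℤ → ℤ → ℤ → ℤ → ℂ) :
    (∑ x : Fin N, ∑ m1 ∈ s, ∑ m2 ∈ s, ∑ m3 ∈ s, ∑ n1 ∈ s, ∑ n2 ∈ s, ∑ n3 ∈ s, ∑ p1 ∈ s, ∑ p2 ∈ s, ∑ p3 ∈ s, ∑ q1 ∈ s, ∑ q2 ∈ s, ∑ q3 ∈ s, g x m1 m2 m3 n1 n2 n3 p1 p2 p3 q1 q2 q3)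
    = ∑ m1 ∈ s, ∑ m2 ∈ s, ∑ m3 ∈ s, ∑ n1 ∈ s, ∑ n2 ∈ s, ∑ n3 ∈ s, ∑ p1 ∈ s, ∑ p2 ∈ s, ∑ p3 ∈ s, ∑ q1 ∈ s, ∑ q2 ∈ s, ∑ q3 ∈ s, ∑ x : Fin N, g x m1 m2 m3 n1 n2 n3 p1 p2 p3 q1 q2 q3 := by
  rw [Finset.sum_comm]
  refine Finset.sum_congr rfl fun m1 _ => ?_
  rw [Finset.sum_comm]
  refine Finset.sum_congr rfl fun m2 _ => ?_
  rw [Finset.sum_comm]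
  refine Finset.sum_congr rfl fun m3 _ => ?_
  rw [Finset.sum_comm]
  refine Finset.sum_congr rfl fun n1 _ => ?_
  rw [Finset.sum_comm]
  refine Finset.sum_congr rfl fun n2 _ => ?_
  rw [Finset.sum_comm]
  refine Finset.sum_congr rfl fun n3 _ => ?_
  rw [Finset.sum_comm]
  refine Finset.sum_congr rfl fun p1 _ => ?_
  rw [Finset.sum_comm]
  refine Finset.sum_congr rfl fun p2 _ => ?_
  rw [Finset.sum_comm]
  refine Finset.sum_congr rfl fun p3 _ => ?_
  rw [Finset.sum_comm]
  refine Finset.sum_congr rfl fun q1 _ => ?_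
  rw [Finset.sum_comm]
  refine Finset.sum_congr rfl fun q2 _ => ?_
  rw [Finset.sum_comm]

lemma interchange {N : ℕ} (s : Finset ℤ)
    (g : Fin N → Fin N → Fin N → Fin N → Fin N → Fin N →
      ℤ → ℤ → ℤ → ℤ → ℤ → ℤ → ℤ → ℤ → ℤ → ℤ → ℤ → ℤ → ℂ) :
    (∑ a : Fin N, ∑ b : Fin N, ∑ c : Fin N, ∑ a' : Fin N, ∑ b' : Fin N, ∑ c' : Fin N, ∑ m1 ∈ s, ∑ m2 ∈ s, ∑ m3 ∈ s, ∑ n1 ∈ s, ∑ n2 ∈ s, ∑ n3 ∈ s, ∑ p1 ∈ s, ∑ p2 ∈ s, ∑ p3 ∈ s, ∑ q1 ∈ s, ∑ q2 ∈ s, ∑ q3 ∈ s, g a b c a' b' c' m1 m2 m3 n1 n2 n3 p1 p2 p3 q1 q2 q3)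
    = ∑ m1 ∈ s, ∑ m2 ∈ s, ∑ m3 ∈ s, ∑ n1 ∈ s, ∑ n2 ∈ s, ∑ n3 ∈ s, ∑ p1 ∈ s, ∑ p2 ∈ s, ∑ p3 ∈ s, ∑ q1 ∈ s, ∑ q2 ∈ s, ∑ q3 ∈ s, ∑ a : Fin N, ∑ b : Fin N, ∑ c : Fin N, ∑ a' : Fin N, ∑ b' : Fin N, ∑ c' : Fin N, g a b c a' b' c' m1 m2 m3 n1 n2 n3 p1 p2 p3 q1 q2 q3 := by
  calc ∑ a : Fin N, ∑ b : Fin N, ∑ c : Fin N, ∑ a' : Fin N, ∑ b' : Fin N, ∑ c' : Fin N, ∑ m1 ∈ s, ∑ m2 ∈ s, ∑ m3 ∈ s, ∑ n1 ∈ s, ∑ n2 ∈ s, ∑ n3 ∈ s, ∑ p1 ∈ s, ∑ p2 ∈ s, ∑ p3 ∈ s, ∑ q1 ∈ s, ∑ q2 ∈ s, ∑ q3 ∈ s, g a b c a' b' c' m1 m2 m3 n1 n2 n3 p1 p2 p3 q1 q2 q3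
    _ = ∑ a : Fin N, ∑ b : Fin N, ∑ c : Fin N, ∑ a' : Fin N, ∑ b' : Fin N, ∑ m1 ∈ s, ∑ m2 ∈ s, ∑ m3 ∈ s, ∑ n1 ∈ s, ∑ n2 ∈ s, ∑ n3 ∈ s, ∑ p1 ∈ s, ∑ p2 ∈ s, ∑ p3 ∈ s, ∑ q1 ∈ s, ∑ q2 ∈ s, ∑ q3 ∈ s, ∑ c' : Fin N, g a b c a' b' c' m1 m2 m3 n1 n2 n3 p1 p2 p3 q1 q2 q3 := by
      refine Finset.sum_congr rfl fun a _ => ?_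
      refine Finset.sum_congr rfl fun b _ => ?_
      refine Finset.sum_congr rfl fun c _ => ?_
      refine Finset.sum_congr rfl fun a' _ => ?_
      refine Finset.sum_congr rfl fun b' _ => ?_
      exact push_in s (fun x m1 m2 m3 n1 n2 n3 p1 p2 p3 q1 q2 q3 => g a b c a' b' x  m1 m2 m3 n1 n2 n3 p1 p2 p3 q1 q2 q3)
    _ = ∑ a : Fin N, ∑ b : Fin N, ∑ c : Fin N, ∑ a' : Fin N, ∑ m1 ∈ s, ∑ m2 ∈ s, ∑ m3 ∈ s, ∑ n1 ∈ s, ∑ n2 ∈ s, ∑ n3 ∈ s, ∑ p1 ∈ s, ∑ p2 ∈ s, ∑ p3 ∈ s, ∑ q1 ∈ s, ∑ q2 ∈ s, ∑ q3 ∈ s, ∑ b' : Fin N, ∑ c' : Fin N, g a b c a' b' c' m1 m2 m3 n1 n2 n3 p1 p2 p3 q1 q2 q3 := by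
      refine Finset.sum_congr rfl fun a _ => ?_
      refine Finset.sum_congr rfl fun b _ => ?_
      refine Finset.sum_congr rfl fun c _ => ?_
      refine Finset.sum_congr rfl fun a' _ => ?_
      exact push_in s (fun x m1 m2 m3 n1 n2 n3 p1 p2 p3 q1 q2 q3 => ∑ c' : Fin N, g a b c a' x c' m1 m2 m3 n1 n2 n3 p1 p2 p3 q1 q2 q3)
    _ = ∑ a : Fin N, ∑ b : Fin N, ∑ c : Fin N, ∑ m1 ∈ s, ∑ m2 ∈ s, ∑ m3 ∈ s, ∑ n1 ∈ s, ∑ n2 ∈ s, ∑ n3 ∈ s, ∑ p1 ∈ s, ∑ p2 ∈ s, ∑ p3 ∈ s, ∑ q1 ∈ s, ∑ q2 ∈ s, ∑ q3 ∈ s, ∑ a' : Fin N, ∑ b' : Fin N, ∑ c' : Fin N, g a b c a' b' c' m1 m2 m3 n1 n2 n3 p1 p2 p3 q1 q2 q3 := by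
      refine Finset.sum_congr rfl fun a _ => ?_
      refine Finset.sum_congr rfl fun b _ => ?_
      refine Finset.sum_congr rfl fun c _ => ?_
      exact push_in s (fun x m1 m2 m3 n1 n2 n3 p1 p2 p3 q1 q2 q3 => ∑ b' : Fin N, ∑ c' : Fin N, g a b c x b' c' m1 m2 m3 n1 n2 n3 p1 p2 p3 q1 q2 q3)
    _ = ∑ a : Fin N, ∑ b : Fin N, ∑ m1 ∈ s, ∑ m2 ∈ s, ∑ m3 ∈ s, ∑ n1 ∈ s, ∑ n2 ∈ s, ∑ n3 ∈ s, ∑ p1 ∈ s, ∑ p2 ∈ s, ∑ p3 ∈ s, ∑ q1 ∈ s, ∑ q2 ∈ s, ∑ q3 ∈ s, ∑ c : Fin N, ∑ a' : Fin N, ∑ b' : Fin N, ∑ c' : Fin N, g a b c a' b' c' m1 m2 m3 n1 n2 n3 p1 p2 p3 q1 q2 q3 := by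
      refine Finset.sum_congr rfl fun a _ => ?_
      refine Finset.sum_congr rfl fun b _ => ?_
      exact push_in s (fun x m1 m2 m3 n1 n2 n3 p1 p2 p3 q1 q2 q3 => ∑ a' : Fin N, ∑ b' : Fin N, ∑ c' : Fin N, g a b x a' b' c' m1 m2 m3 n1 n2 n3 p1 p2 p3 q1 q2 q3)
    _ = ∑ a : Fin N, ∑ m1 ∈ s, ∑ m2 ∈ s, ∑ m3 ∈ s, ∑ n1 ∈ s, ∑ n2 ∈ s, ∑ n3 ∈ s, ∑ p1 ∈ s, ∑ p2 ∈ s, ∑ p3 ∈ s, ∑ q1 ∈ s, ∑ q2 ∈ s, ∑ q3 ∈ s, ∑ b : Fin N, ∑ c : Fin N, ∑ a' : Fin N, ∑ b' : Fin N, ∑ c' : Fin N, g a b c a' b' c' m1 m2 m3 n1 n2 n3 p1 p2 p3 q1 q2 q3 := by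
      refine Finset.sum_congr rfl fun a _ => ?_
      exact push_in s (fun x m1 m2 m3 n1 n2 n3 p1 p2 p3 q1 q2 q3 => ∑ c : Fin N, ∑ a' : Fin N, ∑ b' : Fin N, ∑ c' : Fin N, g a x c a' b' c' m1 m2 m3 n1 n2 n3 p1 p2 p3 q1 q2 q3)
    _ = ∑ m1 ∈ s, ∑ m2 ∈ s, ∑ m3 ∈ s, ∑ n1 ∈ s, ∑ n2 ∈ s, ∑ n3 ∈ s, ∑ p1 ∈ s, ∑ p2 ∈ s, ∑ p3 ∈ s, ∑ q1 ∈ s, ∑ q2 ∈ s, ∑ q3 ∈ s, ∑ a : Fin N, ∑ b : Fin N, ∑ c : Fin N, ∑ a' : Fin N, ∑ b' : Fin N, ∑ c' : Fin N, g a b c a' b' c' m1 m2 m3 n1 n2 n3 p1 p2 p3 q1 q2 q3 := by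
      exact push_in s (fun x m1 m2 m3 n1 n2 n3 p1 p2 p3 q1 q2 q3 => ∑ b : Fin N, ∑ c : Fin N, ∑ a' : Fin N, ∑ b' : Fin N, ∑ c' : Fin N, g  x b c a' b' c' m1 m2 m3 n1 n2 n3 p1 p2 p3 q1 q2 q3)


set_option maxHeartbeats 2000000 in
lemma big_iden {N : ℕ} (s : Finset ℤ) (F : ℤ → ℤ → ℤ → ℂ) (e : ℤ → ℤ → ℂ)
    (hmul : ∀ a m n : ℤ, e a m * e a n = e a (m + n)) :
    (∑ a : Fin N, ∑ b : Fin N, ∑ c : Fin N, ∑ a' : Fin N, ∑ b' : Fin N, ∑ c' : Fin N,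
      (∑ m1 ∈ s, ∑ m2 ∈ s, ∑ m3 ∈ s,
          F m1 m2 m3 * (e ((a:ℕ):ℤ) m1 * e ((b:ℕ):ℤ) m2 * e ((c:ℕ):ℤ) m3)) *
      (∑ m1 ∈ s, ∑ m2 ∈ s, ∑ m3 ∈ s,
          F m1 m2 m3 * (e ((a:ℕ):ℤ) m1 * e ((b':ℕ):ℤ) m2 * e ((c':ℕ):ℤ) m3)) *
      (∑ m1 ∈ s, ∑ m2 ∈ s, ∑ m3 ∈ s,
          F m1 m2 m3 * (e ((a':ℕ):ℤ) m1 * e ((b:ℕ):ℤ) m2 * e ((c':ℕ):ℤ) m3)) *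
      (∑ m1 ∈ s, ∑ m2 ∈ s, ∑ m3 ∈ s,
          F m1 m2 m3 * (e ((a':ℕ):ℤ) m1 * e ((b':ℕ):ℤ) m2 * e ((c:ℕ):ℤ) m3)))
    = ∑ m1 ∈ s, ∑ m2 ∈ s, ∑ m3 ∈ s, ∑ n1 ∈ s, ∑ n2 ∈ s, ∑ n3 ∈ s,
      ∑ p1 ∈ s, ∑ p2 ∈ s, ∑ p3 ∈ s, ∑ q1 ∈ s, ∑ q2 ∈ s, ∑ q3 ∈ s,
        (F m1 m2 m3 * F n1 n2 n3 * F p1 p2 p3 * F q1 q2 q3) *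
        (∑ c' : Fin N, e ((c':ℕ):ℤ) (n3 + p3)) *
        (∑ b' : Fin N, e ((b':ℕ):ℤ) (n2 + q2)) *
        (∑ a' : Fin N, e ((a':ℕ):ℤ) (p1 + q1)) *
        (∑ c : Fin N, e ((c:ℕ):ℤ) (m3 + q3)) *
        (∑ b : Fin N, e ((b:ℕ):ℤ) (m2 + p2)) *
        (∑ a : Fin N, e ((a:ℕ):ℤ) (m1 + n1)) := by
  trans (∑ a : Fin N, ∑ b : Fin N, ∑ c : Fin N, ∑ a' : Fin N, ∑ b' : Fin N, ∑ c' : Fin N,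
      ∑ m1 ∈ s, ∑ m2 ∈ s, ∑ m3 ∈ s, ∑ n1 ∈ s, ∑ n2 ∈ s, ∑ n3 ∈ s,
      ∑ p1 ∈ s, ∑ p2 ∈ s, ∑ p3 ∈ s, ∑ q1 ∈ s, ∑ q2 ∈ s, ∑ q3 ∈ s,
        (F m1 m2 m3 * (e ((a:ℕ):ℤ) m1 * e ((b:ℕ):ℤ) m2 * e ((c:ℕ):ℤ) m3)) *
        ((F n1 n2 n3 * (e ((a:ℕ):ℤ) n1 * e ((b':ℕ):ℤ) n2 * e ((c':ℕ):ℤ) n3)) *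
         ((F p1 p2 p3 * (e ((a':ℕ):ℤ) p1 * e ((b:ℕ):ℤ) p2 * e ((c':ℕ):ℤ) p3)) *
          (F q1 q2 q3 * (e ((a':ℕ):ℤ) q1 * e ((b':ℕ):ℤ) q2 * e ((c:ℕ):ℤ) q3)))))
  · refine Finset.sum_congr rfl fun a _ => Finset.sum_congr rfl fun b _ =>
      Finset.sum_congr rfl fun c _ => Finset.sum_congr rfl fun a' _ =>
      Finset.sum_congr rfl fun b' _ => Finset.sum_congr rfl fun c' _ => ?_
    exact prod4_flatten s _ _ _ _
  trans (∑ m1 ∈ s, ∑ m2 ∈ s, ∑ m3 ∈ s, ∑ n1 ∈ s, ∑ n2 ∈ s, ∑ n3 ∈ s,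
      ∑ p1 ∈ s, ∑ p2 ∈ s, ∑ p3 ∈ s, ∑ q1 ∈ s, ∑ q2 ∈ s, ∑ q3 ∈ s,
      ∑ a : Fin N, ∑ b : Fin N, ∑ c : Fin N, ∑ a' : Fin N, ∑ b' : Fin N, ∑ c' : Fin N,
        (F m1 m2 m3 * (e ((a:ℕ):ℤ) m1 * e ((b:ℕ):ℤ) m2 * e ((c:ℕ):ℤ) m3)) *
        ((F n1 n2 n3 * (e ((a:ℕ):ℤ) n1 * e ((b':ℕ):ℤ) n2 * e ((c':ℕ):ℤ) n3)) *
         ((F p1 p2 p3 * (e ((a':ℕ):ℤ) p1 * e ((b:ℕ):ℤ) p2 * e ((c':ℕ):ℤ) p3)) *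
          (F q1 q2 q3 * (e ((a':ℕ):ℤ) q1 * e ((b':ℕ):ℤ) q2 * e ((c:ℕ):ℤ) q3)))))
  · exact interchange s _
  refine Finset.sum_congr rfl fun m1 _ => Finset.sum_congr rfl fun m2 _ =>
    Finset.sum_congr rfl fun m3 _ => Finset.sum_congr rfl fun n1 _ =>
    Finset.sum_congr rfl fun n2 _ => Finset.sum_congr rfl fun n3 _ =>
    Finset.sum_congr rfl fun p1 _ => Finset.sum_congr rfl fun p2 _ =>
    Finset.sum_congr rfl fun p3 _ => Finset.sum_congr rfl fun q1 _ =>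
    Finset.sum_congr rfl fun q2 _ => Finset.sum_congr rfl fun q3 _ => ?_
  rw [← sum6_factor (fun x : Fin N => e ((x:ℕ):ℤ) (m1 + n1))
      (fun x : Fin N => e ((x:ℕ):ℤ) (m2 + p2))
      (fun x : Fin N => e ((x:ℕ):ℤ) (m3 + q3))
      (fun x : Fin N => e ((x:ℕ):ℤ) (p1 + q1))
      (fun x : Fin N => e ((x:ℕ):ℤ) (n2 + q2))
      (fun x : Fin N => e ((x:ℕ):ℤ) (n3 + p3))
      (F m1 m2 m3 * F n1 n2 n3 * F p1 p2 p3 * F q1 q2 q3)]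
  refine Finset.sum_congr rfl fun a _ => Finset.sum_congr rfl fun b _ =>
    Finset.sum_congr rfl fun c _ => Finset.sum_congr rfl fun a' _ =>
    Finset.sum_congr rfl fun b' _ => Finset.sum_congr rfl fun c' _ => ?_
  simp only [← hmul]
  ring

set_option maxHeartbeats 2000000 in
lemma collapse (j : ℕ) (c : ℂ) (F : ℤ → ℤ → ℤ → ℂ) :
    (∑ m1 ∈ Finset.Icc (-(j:ℤ)) (j:ℤ), ∑ m2 ∈ Finset.Icc (-(j:ℤ)) (j:ℤ),
     ∑ m3 ∈ Finset.Icc (-(j:ℤ)) (j:ℤ), ∑ n1 ∈ Finset.Icc (-(j:ℤ)) (j:ℤ),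
     ∑ n2 ∈ Finset.Icc (-(j:ℤ)) (j:ℤ), ∑ n3 ∈ Finset.Icc (-(j:ℤ)) (j:ℤ),
     ∑ p1 ∈ Finset.Icc (-(j:ℤ)) (j:ℤ), ∑ p2 ∈ Finset.Icc (-(j:ℤ)) (j:ℤ),
     ∑ p3 ∈ Finset.Icc (-(j:ℤ)) (j:ℤ), ∑ q1 ∈ Finset.Icc (-(j:ℤ)) (j:ℤ),
     ∑ q2 ∈ Finset.Icc (-(j:ℤ)) (j:ℤ), ∑ q3 ∈ Finset.Icc (-(j:ℤ)) (j:ℤ),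
        (F m1 m2 m3 * F n1 n2 n3 * F p1 p2 p3 * F q1 q2 q3) *
        (if p3 = -n3 then c else 0) * (if q2 = -n2 then c else 0) *
        (if q1 = -p1 then c else 0) * (if q3 = -m3 then c else 0) *
        (if p2 = -m2 then c else 0) * (if n1 = -m1 then c else 0))
    = ∑ na ∈ Finset.Icc (-(j:ℤ)) (j:ℤ), ∑ nb ∈ Finset.Icc (-(j:ℤ)) (j:ℤ),
      ∑ nc ∈ Finset.Icc (-(j:ℤ)) (j:ℤ), ∑ na' ∈ Finset.Icc (-(j:ℤ)) (j:ℤ),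
      ∑ nb' ∈ Finset.Icc (-(j:ℤ)) (j:ℤ), ∑ nc' ∈ Finset.Icc (-(j:ℤ)) (j:ℤ),
        c ^ 6 * (F na nb nc * F (-na) nb' nc' * F na' (-nb) (-nc') *
          F (-na') (-nb') (-nc)) := by
  simp only [mul_ite, mul_zero, ite_mul, zero_mul, Finset.sum_ite_irrel,
    Finset.sum_const_zero, Finset.sum_ite_eq', neg_mem_IccJ]
  refine Finset.sum_congr rfl fun na hna => ?_
  rw [if_pos hna]
  refine Finset.sum_congr rfl fun nb hnb => ?_
  rw [if_pos hnb]
  refine Finset.sum_congr rfl fun nc hnc => ?_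
  rw [if_pos hnc]
  refine Eq.trans (?_ : _ = ∑ nb' ∈ Finset.Icc (-(j:ℤ)) (j:ℤ),
      ∑ nc' ∈ Finset.Icc (-(j:ℤ)) (j:ℤ), ∑ na' ∈ Finset.Icc (-(j:ℤ)) (j:ℤ),
      c ^ 6 * (F na nb nc * F (-na) nb' nc' * F na' (-nb) (-nc') *
        F (-na') (-nb') (-nc))) ?_
  · refine Finset.sum_congr rfl fun nb' hnb' => Finset.sum_congr rfl fun nc' hnc' =>
      Finset.sum_congr rfl fun na' hna' => ?_
    rw [if_pos hna', if_pos hnb', if_pos hnc']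
    ring
  · exact Eq.trans (Finset.sum_congr rfl fun nb' _ => Finset.sum_comm) Finset.sum_comm


lemma phi_eq (j N : ℕ) (t : ℤ → ℤ → ℤ → ℂ) (a b c : ℤ) :
    fourierPresentation j N t a b c
      = ∑ m1 ∈ Finset.Icc (-(j : ℤ)) (j : ℤ), ∑ m2 ∈ Finset.Icc (-(j : ℤ)) (j : ℤ),
          ∑ m3 ∈ Finset.Icc (-(j : ℤ)) (j : ℤ),
            t m1 m2 m3 * Complex.I ^ (3 * (j : ℤ) - |m1| - |m2| - |m3|) *
              (Ew N a m1 * Ew N b m2 * Ew N c m3) := by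
  unfold fourierPresentation
  refine Finset.sum_congr rfl fun m1 _ => Finset.sum_congr rfl fun m2 _ =>
    Finset.sum_congr rfl fun m3 _ => ?_
  rw [Ew, Ew, Ew, ← Complex.exp_add, ← Complex.exp_add]
  congr 2
  ring

/-- The tetrahedron invariant in direct space equals `N⁶` times the corresponding
contraction of `t` with itself through the invariant metric. -/
theorem tetrahedron_invariant_fourier (j N : ℕ) (hN : N = 2 * j + 1)
    (t : ℤ → ℤ → ℤ → ℂ)
    (φ : ℤ → ℤ → ℤ → ℂ) (hφ : φ = fourierPresentation j N t) :
    ∑ a : Fin N, ∑ b : Fin N, ∑ c : Fin N, ∑ a' : Fin N, ∑ b' : Fin N, ∑ c' : Fin N,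
        φ ((a : ℕ) : ℤ) ((b : ℕ) : ℤ) ((c : ℕ) : ℤ) *
          φ ((a : ℕ) : ℤ) ((b' : ℕ) : ℤ) ((c' : ℕ) : ℤ) *
          φ ((a' : ℕ) : ℤ) ((b : ℕ) : ℤ) ((c' : ℕ) : ℤ) *
          φ ((a' : ℕ) : ℤ) ((b' : ℕ) : ℤ) ((c : ℕ) : ℤ)
      = (N : ℂ) ^ 6 *
          ∑ na ∈ Finset.Icc (-(j : ℤ)) (j : ℤ), ∑ nb ∈ Finset.Icc (-(j : ℤ)) (j : ℤ),
            ∑ nc ∈ Finset.Icc (-(j : ℤ)) (j : ℤ), ∑ na' ∈ Finset.Icc (-(j : ℤ)) (j : ℤ),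
              ∑ nb' ∈ Finset.Icc (-(j : ℤ)) (j : ℤ), ∑ nc' ∈ Finset.Icc (-(j : ℤ)) (j : ℤ),
                (-1 : ℂ) ^ (((j : ℤ) - |na|) + ((j : ℤ) - |nb|) + ((j : ℤ) - |nc|)
                    + ((j : ℤ) - |na'|) + ((j : ℤ) - |nb'|) + ((j : ℤ) - |nc'|)) *
                  (t na nb nc * t (-na) nb' nc' * t na' (-nb) (-nc') *
                    t (-na') (-nb') (-nc)) := by
  subst hφ
  have hNpos : 0 < N := by omega
  have hdelta : ∀ m n : ℤ, m ∈ Finset.Icc (-(j:ℤ)) (j:ℤ) →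
      n ∈ Finset.Icc (-(j:ℤ)) (j:ℤ) →
      (∑ x : Fin N, Ew N ((x:ℕ):ℤ) (m + n)) = if n = -m then (N:ℂ) else 0 := by
    intro m n hm hn
    rw [sum_Ew N hNpos]
    simp only [Finset.mem_Icc] at hm hn
    by_cases h : n = -m
    · have hz : m + n = 0 := by omega
      rw [if_pos (show (N:ℤ) ∣ m + n by rw [hz]; exact dvd_zero _), if_pos h]
    · have hnd : ¬ (N:ℤ) ∣ m + n := by
        intro hdvd
        have h3 : m + n ≠ 0 := by omega
        have h4 : (N:ℤ) ≤ |m + n| := Int.le_of_dvd (abs_pos.mpr h3) ((dvd_abs _ _).mpr hdvd)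
        have h5 : |m + n| < (N:ℤ) := abs_lt.mpr ⟨by omega, by omega⟩
        omega
      rw [if_neg hnd, if_neg h]
  simp only [phi_eq]
  rw [big_iden (Finset.Icc (-(j:ℤ)) (j:ℤ))
      (fun x y z => t x y z * Complex.I ^ (3 * (j:ℤ) - |x| - |y| - |z|)) (Ew N) (Ew_mul N)]
  trans (∑ m1 ∈ Finset.Icc (-(j:ℤ)) (j:ℤ), ∑ m2 ∈ Finset.Icc (-(j:ℤ)) (j:ℤ),
     ∑ m3 ∈ Finset.Icc (-(j:ℤ)) (j:ℤ), ∑ n1 ∈ Finset.Icc (-(j:ℤ)) (j:ℤ),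
     ∑ n2 ∈ Finset.Icc (-(j:ℤ)) (j:ℤ), ∑ n3 ∈ Finset.Icc (-(j:ℤ)) (j:ℤ),
     ∑ p1 ∈ Finset.Icc (-(j:ℤ)) (j:ℤ), ∑ p2 ∈ Finset.Icc (-(j:ℤ)) (j:ℤ),
     ∑ p3 ∈ Finset.Icc (-(j:ℤ)) (j:ℤ), ∑ q1 ∈ Finset.Icc (-(j:ℤ)) (j:ℤ),
     ∑ q2 ∈ Finset.Icc (-(j:ℤ)) (j:ℤ), ∑ q3 ∈ Finset.Icc (-(j:ℤ)) (j:ℤ),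
        ((t m1 m2 m3 * Complex.I ^ (3 * (j:ℤ) - |m1| - |m2| - |m3|)) *
         (t n1 n2 n3 * Complex.I ^ (3 * (j:ℤ) - |n1| - |n2| - |n3|)) *
         (t p1 p2 p3 * Complex.I ^ (3 * (j:ℤ) - |p1| - |p2| - |p3|)) *
         (t q1 q2 q3 * Complex.I ^ (3 * (j:ℤ) - |q1| - |q2| - |q3|))) *
        (if p3 = -n3 then (N:ℂ) else 0) * (if q2 = -n2 then (N:ℂ) else 0) *
        (if q1 = -p1 then (N:ℂ) else 0) * (if q3 = -m3 then (N:ℂ) else 0) *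
        (if p2 = -m2 then (N:ℂ) else 0) * (if n1 = -m1 then (N:ℂ) else 0))
  · refine Finset.sum_congr rfl fun m1 hm1 => Finset.sum_congr rfl fun m2 hm2 =>
      Finset.sum_congr rfl fun m3 hm3 => Finset.sum_congr rfl fun n1 hn1 =>
      Finset.sum_congr rfl fun n2 hn2 => Finset.sum_congr rfl fun n3 hn3 =>
      Finset.sum_congr rfl fun p1 hp1 => Finset.sum_congr rfl fun p2 hp2 =>
      Finset.sum_congr rfl fun p3 hp3 => Finset.sum_congr rfl fun q1 hq1 =>
      Finset.sum_congr rfl fun q2 hq2 => Finset.sum_congr rfl fun q3 hq3 => ?_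
    rw [hdelta n3 p3 hn3 hp3, hdelta n2 q2 hn2 hq2, hdelta p1 q1 hp1 hq1,
        hdelta m3 q3 hm3 hq3, hdelta m2 p2 hm2 hp2, hdelta m1 n1 hm1 hn1]
  · rw [collapse j (N:ℂ)
        (fun x y z => t x y z * Complex.I ^ (3 * (j:ℤ) - |x| - |y| - |z|))]
    simp only [Finset.mul_sum]
    refine Finset.sum_congr rfl fun na hna => Finset.sum_congr rfl fun nb hnb =>
      Finset.sum_congr rfl fun nc hnc => Finset.sum_congr rfl fun na' hna' =>
      Finset.sum_congr rfl fun nb' hnb' => Finset.sum_congr rfl fun nc' hnc' => ?_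
    simp only [Finset.mem_Icc] at hna hnb hnc hna' hnb' hnc'
    have hIp := Ipow_combine j na nb nc na' nb' nc'
      (abs_le.mpr ⟨hna.1, hna.2⟩) (abs_le.mpr ⟨hnb.1, hnb.2⟩)
      (abs_le.mpr ⟨hnc.1, hnc.2⟩) (abs_le.mpr ⟨hna'.1, hna'.2⟩)
      (abs_le.mpr ⟨hnb'.1, hnb'.2⟩) (abs_le.mpr ⟨hnc'.1, hnc'.2⟩)
    simp only [abs_neg]
    linear_combination ((N:ℂ))^6 * (t na nb nc * t (-na) nb' nc' * t na' (-nb) (-nc')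
      * t (-na') (-nb') (-nc)) * hIp
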